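/- Let D be a finite multiset of integers and let T be the multiset obtained from D by replacing each element with its absolute value. Then the set of sub-multiset sums of D and the set of sub-multiset sums of T have the same cardinality: |D⁺| = |T⁺|. -/
import Mathlib


/-- The set of sums of sub-multisets of `D` (including the empty sum `0`). -/
def subSums (D : Multiset ℤ) : Finset ℤ :=
  D.powerset.toFinset.image Multiset.sum

lemma subSums_cons (a : ℤ) (D : Multiset ℤ) :
    subSums (a ::ₘ D) = subSums D ∪ (subSums D).image (· + a) := by
  unfold subSums
  rw [Multiset.powerset_cons, Multiset.toFinset_add, Finset.image_union,
    Multiset.toFinset_map, Finset.image_image, Finset.image_image]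
  congr 1
  ext x
  simp [Function.comp, Multiset.sum_cons, add_comm]

lemma subSums_shift (D : Multiset ℤ) :
    ∃ c : ℤ, subSums (D.map (fun d => |d|)) = (subSums D).image (· + c) := by
  induction D using Multiset.induction_on with
  | empty => exact ⟨0, by simp⟩
  | cons a D ih =>
    obtain ⟨c, hc⟩ := ih
    rw [Multiset.map_cons]
    rcases le_or_gt 0 a with ha | ha
    · refine ⟨c, ?_⟩
      rw [abs_of_nonneg ha, subSums_cons, subSums_cons, hc, Finset.image_union,
        Finset.image_image, Finset.image_image]
      congr 1
      ext x
      simp only [Finset.mem_image, Function.comp]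
      constructor
      · rintro ⟨y, hy, rfl⟩; exact ⟨y, hy, by ring⟩
      · rintro ⟨y, hy, rfl⟩; exact ⟨y, hy, by ring⟩
    · refine ⟨c - a, ?_⟩
      rw [abs_of_neg ha, subSums_cons, subSums_cons, hc, Finset.image_union,
        Finset.image_image, Finset.image_image, Finset.union_comm]
      congr 1
      · ext x
        simp only [Finset.mem_image, Function.comp]
        constructor
        · rintro ⟨y, hy, rfl⟩; exact ⟨y, hy, by ring⟩
        · rintro ⟨y, hy, rfl⟩; exact ⟨y, hy, by ring⟩
      · ext x
        simp only [Finset.mem_image, Function.comp]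
        constructor
        · rintro ⟨y, hy, rfl⟩; exact ⟨y, hy, by ring⟩
        · rintro ⟨y, hy, rfl⟩; exact ⟨y, hy, by ring⟩

theorem stmt1 (D : Multiset ℤ) :
    (subSums D).card = (subSums (D.map (fun d => |d|))).card := by
  obtain ⟨c, hc⟩ := subSums_shift D
  rw [hc, Finset.card_image_of_injective _ (add_left_injective c)]
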